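/- Let T > 0, n ∈ ℕ, p ∈ [1,∞), σ > 0, and let D ⊆ L^p((0,T);ℝⁿ) satisfy: (D1) every u ∈ D has a representative v with v(t) ∈ {0,1}ⁿ for all t ∈ (0,T) and Σ_{j=1}^n Var(v_j;(0,T)) ≤ σ (pointwise total variation), and (D2) D is closed in L^p((0,T);ℝⁿ). Let Π : L^p((0,T);ℝⁿ) → ℝ^M be the local averaging projection Π(u)_i = (1/λ(I_i)) ∫_{I_i} u_{j_i} dλ for nonempty bounded open subintervals I₁,…,I_M ⊆ (0,T) and indices j₁,…,j_M ∈ {1,…,n}, and set C_{D,Π} := conv{Π(u) : u ∈ D}. Then the closure in L^p((0,T);ℝⁿ) of the convex hull of D is contained in V := {v ∈ L^p((0,T);ℝⁿ) : Π(v) ∈ C_{D,Π}}. -/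

import Mathlib

open MeasureTheory Set Filter
open scoped ENNReal NNReal Topology

/-- Extend a bounded function monotone on `S` to a bounded monotone function on `ℝ`. -/
lemma monotoneOn_extend {C : ℝ} (hC : 0 ≤ C) {S : Set ℝ} {p : ℝ → ℝ}
    (hp : MonotoneOn p S) (hbd : ∀ x ∈ S, |p x| ≤ C) :
    ∃ P : ℝ → ℝ, Monotone P ∧ (∀ x ∈ S, P x = p x) ∧ (∀ x, |P x| ≤ C) := by
  refine ⟨fun x => sSup (insert (-C) (p '' (S ∩ Iic x))), ?_, ?_, ?_⟩
  · intro x y hxy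
    apply csSup_le_csSup _ (insert_nonempty _ _)
    · exact insert_subset_insert (image_mono (inter_subset_inter_right _ (Iic_subset_Iic.2 hxy)))
    · refine ⟨C, ?_⟩
      rintro z (rfl | ⟨w, ⟨hwS, _⟩, rfl⟩)
      · linarith
      · exact (abs_le.1 (hbd w hwS)).2
  · intro x hx
    apply le_antisymm
    · apply csSup_le (insert_nonempty _ _)
      rintro z (rfl | ⟨w, ⟨hwS, hwx⟩, rfl⟩)
      · exact (abs_le.1 (hbd x hx)).1
      · exact hp hwS hx hwx
    · refine le_csSup ⟨C, ?_⟩ (mem_insert_of_mem _ ⟨x, ⟨hx, le_refl x⟩, rfl⟩)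
      rintro z (rfl | ⟨w, ⟨hwS, _⟩, rfl⟩)
      · linarith
      · exact (abs_le.1 (hbd w hwS)).2
  · intro x
    rw [abs_le]
    constructor
    · refine le_csSup ⟨C, ?_⟩ (mem_insert _ _)
      rintro z (rfl | ⟨w, ⟨hwS, _⟩, rfl⟩)
      · linarith
      · exact (abs_le.1 (hbd w hwS)).2
    · apply csSup_le (insert_nonempty _ _)
      rintro z (rfl | ⟨w, ⟨hwS, _⟩, rfl⟩)
      · linarith
      · exact (abs_le.1 (hbd w hwS)).2

lemma helly_mono {ι : Type} [Countable ι] (C : ℝ) (hC : 0 ≤ C) (f : ℕ → ι → ℝ → ℝ)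
    (hmono : ∀ k i, Monotone (f k i)) (hbd : ∀ k i x, |f k i x| ≤ C) :
    ∃ φ : ℕ → ℕ, StrictMono φ ∧ ∃ N : Set ℝ, N.Countable ∧
      ∀ i : ι, ∀ x ∉ N, ∃ l : ℝ, Tendsto (fun k => f (φ k) i x) atTop (𝓝 l) := by
  -- compactness in the product space
  set P : Set ((ι × ℚ) → ℝ) := Set.univ.pi fun _ => Icc (-C) C with hP
  have hPc : IsCompact P := isCompact_univ_pi fun _ => isCompact_Icc
  have hF : ∀ k, (fun iq : ι × ℚ => f k iq.1 (iq.2 : ℝ)) ∈ P := by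
    intro k
    intro iq _
    exact abs_le.1 (hbd k iq.1 iq.2)
  obtain ⟨G, hGP, φ, hφ, hconv⟩ := hPc.isSeqCompact hF
  have hGpt : ∀ i : ι, ∀ q : ℚ, Tendsto (fun k => f (φ k) i q) atTop (𝓝 (G (i, q))) := by
    intro i q
    exact (tendsto_pi_nhds.1 hconv) (i, q)
  -- the candidate limit functions
  set g : ι → ℝ → ℝ := fun i x =>
    sSup (insert (-C) ((fun q : ℚ => G (i, q)) '' {q : ℚ | (q : ℝ) ≤ x})) with hg
  have hub : ∀ i x, ∀ z ∈ insert (-C) ((fun q : ℚ => G (i, q)) '' {q : ℚ | (q : ℝ) ≤ x}),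
      z ≤ C := by
    rintro i x z (rfl | ⟨q, _, rfl⟩)
    · linarith
    · exact (hGP (i, q) trivial).2
  have hbdd : ∀ i x, BddAbove (insert (-C) ((fun q : ℚ => G (i, q)) '' {q : ℚ | (q : ℝ) ≤ x})) :=
    fun i x => ⟨C, hub i x⟩
  have hgmono : ∀ i, Monotone (g i) := by
    intro i x y hxy
    apply csSup_le_csSup (hbdd i y) (insert_nonempty _ _)
    exact insert_subset_insert (image_mono fun q hq => le_trans hq hxy)
  refine ⟨φ, hφ, ⋃ i, {x | ¬ContinuousAt (g i) x},
    countable_iUnion fun i => (hgmono i).countable_not_continuousAt, ?_⟩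
  intro i x hx
  have hcont : ContinuousAt (g i) x := by
    by_contra h
    exact hx (mem_iUnion.2 ⟨i, h⟩)
  set a : ℕ → ℝ := fun k => f (φ k) i x with ha
  have habd : ∀ k, |a k| ≤ C := fun k => hbd (φ k) i x
  have hBU : IsBoundedUnder (· ≤ ·) atTop a :=
    isBoundedUnder_of ⟨C, fun k => (abs_le.1 (habd k)).2⟩
  have hBL : IsBoundedUnder (· ≥ ·) atTop a :=
    isBoundedUnder_of ⟨-C, fun k => (abs_le.1 (habd k)).1⟩
  have hCB : IsCoboundedUnder (· ≥ ·) atTop a := hBU.isCoboundedUnder_ge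
  have hCB' : IsCoboundedUnder (· ≤ ·) atTop a := hBL.isCoboundedUnder_le
  have hliminf : g i x ≤ atTop.liminf a := by
    apply csSup_le (insert_nonempty _ _)
    rintro z (rfl | ⟨q, hq, rfl⟩)
    · exact le_liminf_of_le hCB (Eventually.of_forall fun k => (abs_le.1 (habd k)).1)
    · have h1 : atTop.liminf (fun k => f (φ k) i q) = G (i, q) := (hGpt i q).liminf_eq
      show G (i, q) ≤ _
      rw [← h1]
      refine liminf_le_liminf (Eventually.of_forall fun k => hmono (φ k) i hq)
        (isBoundedUnder_of ⟨-C, fun k => (abs_le.1 (hbd (φ k) i q)).1⟩) hCB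
  have hlimsup : atTop.limsup a ≤ g i x := by
    apply le_of_forall_pos_le_add
    intro ε hε
    obtain ⟨δ, hδ, hδε⟩ := Metric.continuousAt_iff.1 hcont ε hε
    obtain ⟨q2, hq2l, hq2r⟩ := exists_rat_btwn (lt_add_of_pos_right x hδ)
    have h1 : atTop.limsup a ≤ atTop.limsup (fun k => f (φ k) i q2) := by
      refine limsup_le_limsup (Eventually.of_forall fun k => hmono (φ k) i hq2l.le) hCB' ?_
      exact isBoundedUnder_of ⟨C, fun k => (abs_le.1 (hbd (φ k) i q2)).2⟩
    have h2 : atTop.limsup (fun k => f (φ k) i q2) = G (i, q2) := (hGpt i q2).limsup_eq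
    have h3 : G (i, q2) ≤ g i q2 :=
      le_csSup (hbdd i q2) (mem_insert_of_mem _ ⟨q2, by simp, rfl⟩)
    have h4 : g i q2 ≤ g i x + ε := by
      have hd : dist (q2 : ℝ) x < δ := by
        rw [Real.dist_eq, abs_of_pos (by linarith)]
        linarith
      have h5 := hδε hd
      rw [Real.dist_eq] at h5
      have h6 := (abs_lt.1 h5).2
      linarith
    calc atTop.limsup a ≤ G (i, q2) := h2 ▸ h1
      _ ≤ g i x + ε := le_trans h3 h4
  exact ⟨g i x, tendsto_of_le_liminf_of_limsup_le hliminf hlimsup hBU hBL⟩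

/-- The convex hull of a compact set in `Fin M → ℝ` is compact. -/
lemma isCompact_convexHull_fin {M : ℕ} {s : Set (Fin M → ℝ)} (hs : IsCompact s) :
    IsCompact (convexHull ℝ s) := by
  classical
  rcases s.eq_empty_or_nonempty with rfl | ⟨s0, hs0⟩
  · simp
  have hφc : Continuous (fun wz : (Fin (M + 1) → ℝ) × (Fin (M + 1) → Fin M → ℝ) =>
      ∑ i, wz.1 i • wz.2 i) := by
    apply continuous_finset_sum
    intro i _
    exact ((continuous_apply i).comp continuous_fst).smul
      ((continuous_apply i).comp continuous_snd)
  have hKc : IsCompact ((stdSimplex ℝ (Fin (M + 1))) ×ˢ (Set.univ.pi fun _ : Fin (M + 1) => s)) :=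
    (isCompact_stdSimplex _ _).prod (isCompact_univ_pi fun _ => hs)
  have himg : convexHull ℝ s = (fun wz : (Fin (M + 1) → ℝ) × (Fin (M + 1) → Fin M → ℝ) =>
      ∑ i, wz.1 i • wz.2 i) '' ((stdSimplex ℝ (Fin (M + 1))) ×ˢ (Set.univ.pi fun _ : Fin (M + 1) => s)) := by
    apply Subset.antisymm
    · intro x hx
      obtain ⟨ι, hι, z, w, hzs, hindep, hwpos, hwsum, hwz⟩ :=
        eq_pos_convex_span_of_mem_convexHull hx
      have hcard : Fintype.card ι ≤ M + 1 := by
        refine hindep.card_le_finrank_succ.trans ?_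
        have h1 := Submodule.finrank_le (vectorSpan ℝ (Set.range z))
        rw [Module.finrank_fintype_fun_eq_card ℝ, Fintype.card_fin] at h1
        omega
      obtain ⟨e⟩ : Nonempty (ι ↪ Fin (M + 1)) :=
        Function.Embedding.nonempty_of_card_le (by simpa using hcard)
      have hchw : ∀ k : ι, (if h : ∃ k', e k' = e k then w h.choose else 0) = w k := by
        intro k
        have h : ∃ k', e k' = e k := ⟨k, rfl⟩
        rw [dif_pos h, e.injective h.choose_spec]
      have hchz : ∀ k : ι, (if h : ∃ k', e k' = e k then z h.choose else s0) = z k := by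
        intro k
        have h : ∃ k', e k' = e k := ⟨k, rfl⟩
        rw [dif_pos h, e.injective h.choose_spec]
      have hmapR : ∀ (f : Fin (M + 1) → ℝ),
          (∀ i, (¬ ∃ k, e k = i) → f i = 0) → ∑ i, f i = ∑ k, f (e k) := by
        intro f hf
        rw [← Finset.sum_map Finset.univ e f]
        symm
        apply Finset.sum_subset (Finset.subset_univ _)
        intro i _ hi
        apply hf
        rintro ⟨k, rfl⟩
        exact hi (Finset.mem_map.2 ⟨k, Finset.mem_univ _, rfl⟩)
      have hmapV : ∀ (f : Fin (M + 1) → (Fin M → ℝ)),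
          (∀ i, (¬ ∃ k, e k = i) → f i = 0) → ∑ i, f i = ∑ k, f (e k) := by
        intro f hf
        rw [← Finset.sum_map Finset.univ e f]
        symm
        apply Finset.sum_subset (Finset.subset_univ _)
        intro i _ hi
        apply hf
        rintro ⟨k, rfl⟩
        exact hi (Finset.mem_map.2 ⟨k, Finset.mem_univ _, rfl⟩)
      refine ⟨(fun i => if h : ∃ k, e k = i then w h.choose else 0,
               fun i => if h : ∃ k, e k = i then z h.choose else s0),
              ⟨⟨fun i => ?_, ?_⟩, fun i _ => ?_⟩, ?_⟩
      · dsimp only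
        by_cases h : ∃ k, e k = i
        · rw [dif_pos h]; exact (hwpos _).le
        · rw [dif_neg h]
      · dsimp only
        rw [hmapR _ (fun i hi => dif_neg hi), ← hwsum]
        exact Finset.sum_congr rfl fun k _ => hchw k
      · dsimp only
        by_cases h : ∃ k, e k = i
        · rw [dif_pos h]; exact hzs ⟨h.choose, rfl⟩
        · rw [dif_neg h]; exact hs0
      · dsimp only
        rw [hmapV (fun i => (if h : ∃ k, e k = i then w h.choose else 0) •
              (if h : ∃ k, e k = i then z h.choose else s0))
            (fun i hi => by rw [dif_neg hi, zero_smul]), ← hwz]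
        exact Finset.sum_congr rfl fun k _ => by rw [hchw k, hchz k]
    · rintro _ ⟨⟨w, z⟩, ⟨⟨hw0, hw1⟩, hz⟩, rfl⟩
      exact mem_convexHull_of_exists_fintype w z hw0 hw1 (fun i => hz i trivial) rfl
  rw [himg]
  exact hKc.image hφc


lemma exists_integral_clm (μ : Measure ℝ) [IsFiniteMeasure μ] (p : ℝ≥0∞) [Fact (1 ≤ p)]
    (hp : p ≠ ⊤) (n : ℕ) (A : Set ℝ) (j0 : Fin n) :
    ∃ ℓ : Lp (Fin n → ℝ) p μ →L[ℝ] ℝ,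
      ∀ z : Lp (Fin n → ℝ) p μ, ℓ z = ∫ t in A, (z : ℝ → Fin n → ℝ) t j0 ∂μ := by
  have hp1 : (1 : ℝ≥0∞) ≤ p := Fact.out
  have hInt : ∀ (z : Lp (Fin n → ℝ) p μ),
      Integrable (fun t => (z : ℝ → Fin n → ℝ) t j0) (μ.restrict A) := by
    intro z
    have h2 : MemLp (⇑z) p (μ.restrict A) := (Lp.memLp z).restrict _
    have h3 : MemLp (⇑z) 1 (μ.restrict A) := h2.mono_exponent hp1
    have h4 : Integrable (⇑z) (μ.restrict A) := memLp_one_iff_integrable.mp h3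
    exact (ContinuousLinearMap.proj (R := ℝ) (φ := fun _ : Fin n => ℝ) j0).integrable_comp h4
  set ℓ : Lp (Fin n → ℝ) p μ →ₗ[ℝ] ℝ :=
    { toFun := fun z => ∫ t in A, (z : ℝ → Fin n → ℝ) t j0 ∂μ
      map_add' := by
        intro z w
        have hco : ⇑(z + w) =ᶠ[ae (μ.restrict A)] ⇑z + ⇑w :=
          (Lp.coeFn_add z w).filter_mono (ae_mono Measure.restrict_le_self)
        calc ∫ t in A, (⇑(z + w)) t j0 ∂μ
            = ∫ t in A, ((⇑z) t j0 + (⇑w) t j0) ∂μ := by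
              refine integral_congr_ae (hco.mono fun x hx => ?_)
              have := congrFun hx j0
              simpa using this
          _ = _ := integral_add (hInt z) (hInt w)
      map_smul' := by
        intro c z
        have hco : ⇑(c • z) =ᶠ[ae (μ.restrict A)] c • ⇑z :=
          (Lp.coeFn_smul c z).filter_mono (ae_mono Measure.restrict_le_self)
        calc ∫ t in A, (⇑(c • z)) t j0 ∂μ
            = ∫ t in A, c * ((⇑z) t j0) ∂μ := by
              refine integral_congr_ae (hco.mono fun x hx => ?_)
              have := congrFun hx j0
              simpa using this
          _ = c * ∫ t in A, (⇑z) t j0 ∂μ := integral_const_mul _ _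
          _ = _ := rfl } with hℓdef
  have hKbd : ∀ (z : Lp (Fin n → ℝ) p μ),
      ‖ℓ z‖ ≤ ((μ.restrict A Set.univ) ^ (1 - 1/p.toReal)).toReal * ‖z‖ := by
    intro z
    set ν := μ.restrict A with hν
    have hAESM : AEStronglyMeasurable (fun t => (z : ℝ → Fin n → ℝ) t j0) ν :=
      (continuous_apply j0).comp_aestronglyMeasurable ((Lp.aestronglyMeasurable z).restrict)
    have h1 : ‖ℓ z‖ ≤ ∫ t, ‖(z : ℝ → Fin n → ℝ) t j0‖ ∂ν := norm_integral_le_integral_norm _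
    have h2 : ∫ t, ‖(z : ℝ → Fin n → ℝ) t j0‖ ∂ν
        = (eLpNorm (fun t => (z : ℝ → Fin n → ℝ) t j0) 1 ν).toReal := by
      rw [eLpNorm_one_eq_lintegral_enorm, integral_norm_eq_lintegral_enorm hAESM]
    have h3 : eLpNorm (fun t => (z : ℝ → Fin n → ℝ) t j0) 1 ν
        ≤ eLpNorm (fun t => (z : ℝ → Fin n → ℝ) t j0) p ν * (ν Set.univ) ^ (1 - 1/p.toReal) := by
      have := eLpNorm_le_eLpNorm_mul_rpow_measure_univ (μ := ν) hp1 hAESM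
      simpa using this
    have h4 : eLpNorm (fun t => (z : ℝ → Fin n → ℝ) t j0) p ν ≤ eLpNorm (⇑z) p ν :=
      eLpNorm_mono fun x => norm_le_pi_norm ((z : ℝ → Fin n → ℝ) x) j0
    have h5 : eLpNorm (⇑z) p ν ≤ eLpNorm (⇑z) p μ :=
      eLpNorm_mono_measure _ Measure.restrict_le_self
    have hfin2 : eLpNorm (⇑z) p μ < ⊤ := Lp.eLpNorm_lt_top z
    have hνfin : ν Set.univ < ⊤ := measure_lt_top _ _
    have hrfin : (ν Set.univ) ^ (1 - 1/p.toReal) ≠ ⊤ := by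
      refine ENNReal.rpow_ne_top_of_nonneg ?_ hνfin.ne
      have hple : (1:ℝ) ≤ p.toReal := by
        rw [← ENNReal.toReal_one]
        exact ENNReal.toReal_mono hp hp1
      have h7 : 1/p.toReal ≤ 1 := by
        rw [div_le_one (by linarith)]
        linarith
      linarith
    have hBne : eLpNorm (⇑z) p μ * (ν Set.univ) ^ (1 - 1/p.toReal) ≠ ⊤ :=
      ENNReal.mul_ne_top hfin2.ne hrfin
    have h6 : (eLpNorm (fun t => (z : ℝ → Fin n → ℝ) t j0) 1 ν).toReal
        ≤ (eLpNorm (⇑z) p μ * (ν Set.univ) ^ (1 - 1/p.toReal)).toReal := by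
      apply ENNReal.toReal_mono hBne
      exact h3.trans (mul_le_mul_left (h4.trans h5) _)
    rw [ENNReal.toReal_mul] at h6
    calc ‖ℓ z‖ ≤ _ := h1
      _ = _ := h2
      _ ≤ (eLpNorm (⇑z) p μ).toReal * ((ν Set.univ) ^ (1 - 1/p.toReal)).toReal := h6
      _ = ((ν Set.univ) ^ (1 - 1/p.toReal)).toReal * ‖z‖ := by
          rw [Lp.norm_def]; ring
  exact ⟨LinearMap.mkContinuous ℓ _ hKbd, fun z => rfl⟩

lemma isCompact_binary_bv (T : ℝ) (hT : 0 < T) (n : ℕ) (p : ℝ≥0∞) [Fact (1 ≤ p)]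
    (hp : p ≠ ⊤) (σ : ℝ) (hσ : 0 < σ)
    (D : Set (Lp (Fin n → ℝ) p (volume.restrict (Ioo (0:ℝ) T))))
    (hD1 : ∀ u ∈ D, ∃ v : ℝ → Fin n → ℝ,
      ((u : ℝ → Fin n → ℝ) =ᵐ[volume.restrict (Ioo (0:ℝ) T)] v) ∧
      (∀ t ∈ Ioo (0:ℝ) T, ∀ j, v t j = 0 ∨ v t j = 1) ∧
      (∑ j : Fin n, eVariationOn (fun s => v s j) (Ioo (0:ℝ) T)) ≤ ENNReal.ofReal σ)
    (hD2 : IsClosed D) : IsCompact D := by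
  classical
  have hp1 : (1 : ℝ≥0∞) ≤ p := Fact.out
  haveI hfin : IsFiniteMeasure (volume.restrict (Ioo (0:ℝ) T)) := by
    constructor
    rw [Measure.restrict_apply_univ]
    exact measure_Ioo_lt_top
  have hseq : IsSeqCompact D := by
    intro u hu
    choose v hv1 hv2 hv3 using fun k => hD1 (u k) (hu k)
    have hc0 : T/2 ∈ Ioo (0:ℝ) T := ⟨by linarith, by linarith⟩
    have hvar : ∀ k jj, eVariationOn (fun s => v k s jj) (Ioo (0:ℝ) T) ≤ ENNReal.ofReal σ :=
      fun k jj => le_trans (Finset.single_le_sum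
        (f := fun jj => eVariationOn (fun s => v k s jj) (Ioo (0:ℝ) T))
        (fun _ _ => zero_le) (Finset.mem_univ jj)) (hv3 k)
    have hlbv : ∀ k jj, LocallyBoundedVariationOn (fun s => v k s jj) (Ioo (0:ℝ) T) := by
      intro k jj x y _ _
      exact ((eVariationOn.mono _ inter_subset_left).trans_lt
        ((hvar k jj).trans_lt ENNReal.ofReal_lt_top)).ne
    have hvb : ∀ k x, x ∈ Ioo (0:ℝ) T → ∀ jj, |v k x jj| ≤ 1 := by
      intro k x hx jj
      rcases hv2 k x hx jj with h | h <;> simp [h]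
    have hpb : ∀ k jj x, x ∈ Ioo (0:ℝ) T →
        |variationOnFromTo (fun s => v k s jj) (Ioo (0:ℝ) T) (T/2) x| ≤ σ := by
      intro k jj x _
      have hto : ∀ y z : ℝ, (eVariationOn (fun s => v k s jj) (Ioo (0:ℝ) T ∩ Icc y z)).toReal ≤ σ :=
        fun y z => ENNReal.toReal_le_of_le_ofReal hσ.le
          (le_trans (eVariationOn.mono _ inter_subset_left) (hvar k jj))
      rcases le_total (T/2) x with h | h
      · rw [variationOnFromTo.eq_of_le _ _ h, abs_of_nonneg ENNReal.toReal_nonneg]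
        exact hto _ _
      · rw [variationOnFromTo.eq_of_ge _ _ h, abs_neg, abs_of_nonneg ENNReal.toReal_nonneg]
        exact hto _ _
    -- extend the Jordan decomposition parts monotonically to all of ℝ
    have hraw : ∀ (k : ℕ) (i : Fin n × Bool), ∃ P : ℝ → ℝ, Monotone P ∧
        (∀ x ∈ Ioo (0:ℝ) T, P x = (if i.2 then
            variationOnFromTo (fun s => v k s i.1) (Ioo (0:ℝ) T) (T/2) x
          else variationOnFromTo (fun s => v k s i.1) (Ioo (0:ℝ) T) (T/2) x - v k x i.1)) ∧
        (∀ x, |P x| ≤ σ + 1) := by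
      rintro k ⟨jj, bb⟩
      cases bb
      · -- the `false` case: q = p - f
        simp only [Bool.false_eq_true, if_false]
        refine monotoneOn_extend (by linarith) ?_ ?_
        · have h1 := variationOnFromTo.sub_self_monotoneOn (hlbv k jj) hc0
          intro x hx y hy hxy
          have := h1 hx hy hxy
          simpa [Pi.sub_apply] using this
        · intro x hx
          have h1 := hpb k jj x hx
          have h2 := hvb k x hx jj
          have h3 : |variationOnFromTo (fun s => v k s jj) (Ioo (0:ℝ) T) (T/2) x - v k x jj|
              ≤ |variationOnFromTo (fun s => v k s jj) (Ioo (0:ℝ) T) (T/2) x| + |v k x jj| := by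
            rw [sub_eq_add_neg]
            exact (abs_add_le _ _).trans (by rw [abs_neg])
          linarith
      · simp only [if_true]
        refine monotoneOn_extend (by linarith) (variationOnFromTo.monotoneOn (hlbv k jj) hc0) ?_
        intro x hx
        linarith [hpb k jj x hx]
    choose F hFmono hFeq hFbd using hraw
    obtain ⟨φ, hφ, N, hN, hconv⟩ := helly_mono (ι := Fin n × Bool) (σ + 1) (by linarith)
      (fun k i x => F k i x) (fun k i => hFmono k i) (fun k i x => hFbd k i x)
    have hptS : ∀ x, x ∈ Ioo (0:ℝ) T → x ∉ N → ∀ jj : Fin n,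
        ∃ l, Tendsto (fun k => v (φ k) x jj) atTop (𝓝 l) := by
      intro x hxS hxN jj
      obtain ⟨l1, h1⟩ := hconv (jj, true) x hxN
      obtain ⟨l2, h2⟩ := hconv (jj, false) x hxN
      refine ⟨l1 - l2, ?_⟩
      refine Tendsto.congr (fun k => ?_) (h1.sub h2)
      rw [hFeq (φ k) (jj, true) x hxS, hFeq (φ k) (jj, false) x hxS]
      simp
    set g : ℝ → Fin n → ℝ := fun x jj => limUnder atTop (fun k => v (φ k) x jj) with hg
    have hgt : ∀ x, x ∈ Ioo (0:ℝ) T → x ∉ N →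
        Tendsto (fun k => v (φ k) x) atTop (𝓝 (g x)) := by
      intro x hxS hxN
      rw [tendsto_pi_nhds]
      intro jj
      obtain ⟨l, hl⟩ := hptS x hxS hxN jj
      have hle : g x jj = l := hl.limUnder_eq
      rw [hle]
      exact hl
    have hae1 : ∀ᵐ x ∂(volume.restrict (Ioo (0:ℝ) T)), x ∈ Ioo (0:ℝ) T :=
      ae_restrict_mem measurableSet_Ioo
    have hae2 : ∀ᵐ x ∂(volume.restrict (Ioo (0:ℝ) T)), x ∉ N := by
      have h0 : (volume.restrict (Ioo (0:ℝ) T)) N = 0 := by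
        rw [Measure.restrict_apply hN.measurableSet]
        exact measure_mono_null inter_subset_left (hN.measure_zero volume)
      exact measure_eq_zero_iff_ae_notMem.mp h0
    have haeeq : ∀ᵐ x ∂(volume.restrict (Ioo (0:ℝ) T)),
        ∀ k, (u (φ k) : ℝ → Fin n → ℝ) x = v (φ k) x := by
      rw [ae_all_iff]
      exact fun k => hv1 (φ k)
    have htends : ∀ᵐ x ∂(volume.restrict (Ioo (0:ℝ) T)),
        Tendsto (fun k => (u (φ k) : ℝ → Fin n → ℝ) x) atTop (𝓝 (g x)) := by
      filter_upwards [hae1, hae2, haeeq] with x h1 h2 h3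
      exact Tendsto.congr (fun k => (h3 k).symm) (hgt x h1 h2)
    have hgm : AEStronglyMeasurable g (volume.restrict (Ioo (0:ℝ) T)) :=
      aestronglyMeasurable_of_tendsto_ae atTop
        (fun k => Lp.aestronglyMeasurable (u (φ k))) htends
    have hgbd : ∀ᵐ x ∂(volume.restrict (Ioo (0:ℝ) T)), ‖g x‖ ≤ 1 := by
      filter_upwards [hae1, hae2] with x h1 h2
      rw [pi_norm_le_iff_of_nonneg zero_le_one]
      intro jj
      have htj : Tendsto (fun k => v (φ k) x jj) atTop (𝓝 (g x jj)) :=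
        (tendsto_pi_nhds.1 (hgt x h1 h2)) jj
      refine le_of_tendsto htj.norm (Eventually.of_forall fun k => ?_)
      simpa [Real.norm_eq_abs] using hvb (φ k) x h1 jj
    have hgmem : MemLp g p (volume.restrict (Ioo (0:ℝ) T)) := MemLp.of_bound hgm 1 hgbd
    have hub : ∀ k, ∀ᵐ x ∂(volume.restrict (Ioo (0:ℝ) T)),
        ‖(u (φ k) : ℝ → Fin n → ℝ) x‖ ≤ 1 := by
      intro k
      filter_upwards [hae1, hv1 (φ k)] with x h1 h2
      rw [h2, pi_norm_le_iff_of_nonneg zero_le_one]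
      intro jj
      simpa [Real.norm_eq_abs] using hvb (φ k) x h1 jj
    have hui : UnifIntegrable (fun k => ((u (φ k) : ℝ → Fin n → ℝ))) p
        (volume.restrict (Ioo (0:ℝ) T)) := by
      apply unifIntegrable_of hp1 hp (fun k => Lp.aestronglyMeasurable _)
      intro ε hε
      refine ⟨2, fun k => ?_⟩
      have hz : {x | (2:ℝ≥0) ≤ ‖(u (φ k) : ℝ → Fin n → ℝ) x‖₊}.indicator
          ((u (φ k) : ℝ → Fin n → ℝ)) =ᵐ[volume.restrict (Ioo (0:ℝ) T)] 0 := by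
        filter_upwards [hub k] with x hx
        have hnot : ¬ ((2:ℝ≥0) ≤ ‖(u (φ k) : ℝ → Fin n → ℝ) x‖₊) := by
          intro hcon
          have h2 : (2:ℝ) ≤ ‖(u (φ k) : ℝ → Fin n → ℝ) x‖ := by
            have := NNReal.coe_le_coe.mpr hcon
            simpa [coe_nnnorm] using this
          linarith
        simp [Set.indicator_apply, hnot]
      rw [eLpNorm_congr_ae hz, eLpNorm_zero]
      exact zero_le
    have hLp := tendsto_Lp_finite_of_tendsto_ae hp1 hp
      (fun k => Lp.aestronglyMeasurable (u (φ k))) hgmem hui htends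
    have htendLp : Tendsto (fun k => u (φ k)) atTop (𝓝 (hgmem.toLp g)) :=
      Lp.tendsto_Lp_of_tendsto_eLpNorm _ hgmem hLp
    exact ⟨hgmem.toLp g, hD2.isSeqClosed (fun k => hu (φ k)) htendLp, φ, hφ, htendLp⟩
  exact hseq.isCompact

/-- Lemma 3.3: the closed convex hull of `D` in `L^p((0,T);ℝⁿ)`
is contained in `V = {v : Π(v) ∈ C_{D,Π}}` for every local averaging
projection `Π`. -/
theorem stmt_5
    (T : ℝ) (hT : 0 < T) (n : ℕ) (p : ℝ≥0∞) [Fact (1 ≤ p)] (hp : p ≠ ⊤)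
    (σ : ℝ) (hσ : 0 < σ)
    (D : Set (Lp (Fin n → ℝ) p (volume.restrict (Ioo (0:ℝ) T))))
    (hD1 : ∀ u ∈ D, ∃ v : ℝ → Fin n → ℝ,
      ((u : ℝ → Fin n → ℝ) =ᵐ[volume.restrict (Ioo (0:ℝ) T)] v) ∧
      (∀ t ∈ Ioo (0:ℝ) T, ∀ j, v t j = 0 ∨ v t j = 1) ∧
      (∑ j : Fin n, eVariationOn (fun s => v s j) (Ioo (0:ℝ) T)) ≤ ENNReal.ofReal σ)
    (hD2 : IsClosed D)
    (M : ℕ) (a b : Fin M → ℝ) (hab : ∀ i, a i < b i)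
    (hsub : ∀ i, Ioo (a i) (b i) ⊆ Ioo (0:ℝ) T)
    (j : Fin M → Fin n) :
    closure (convexHull ℝ D) ⊆
      {v : Lp (Fin n → ℝ) p (volume.restrict (Ioo (0:ℝ) T)) |
        (fun i : Fin M => (b i - a i)⁻¹ *
            ∫ t in Ioo (a i) (b i), (v : ℝ → Fin n → ℝ) t (j i)
              ∂(volume.restrict (Ioo (0:ℝ) T))) ∈
          convexHull ℝ
            ((fun u : Lp (Fin n → ℝ) p (volume.restrict (Ioo (0:ℝ) T)) =>
                fun i : Fin M => (b i - a i)⁻¹ *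
                  ∫ t in Ioo (a i) (b i), (u : ℝ → Fin n → ℝ) t (j i)
                    ∂(volume.restrict (Ioo (0:ℝ) T))) '' D)} := by
  classical
  have hp1 : (1 : ℝ≥0∞) ≤ p := Fact.out
  haveI hfin : IsFiniteMeasure (volume.restrict (Ioo (0:ℝ) T)) := by
    constructor
    rw [Measure.restrict_apply_univ]
    exact measure_Ioo_lt_top
  choose ℓ hℓ using fun i : Fin M =>
    exists_integral_clm (volume.restrict (Ioo (0:ℝ) T)) p hp n (Ioo (a i) (b i)) (j i)
  set Pi0 : Lp (Fin n → ℝ) p (volume.restrict (Ioo (0:ℝ) T)) → (Fin M → ℝ) :=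
    fun z i => (b i - a i)⁻¹ * ℓ i z with hPi0
  have hPieq : ∀ z : Lp (Fin n → ℝ) p (volume.restrict (Ioo (0:ℝ) T)), Pi0 z =
      fun i : Fin M => (b i - a i)⁻¹ *
        ∫ t in Ioo (a i) (b i), (z : ℝ → Fin n → ℝ) t (j i)
          ∂(volume.restrict (Ioo (0:ℝ) T)) := by
    intro z
    funext i
    rw [hPi0]
    dsimp only
    rw [hℓ i z]
  have hPicont : Continuous Pi0 := by
    apply continuous_pi
    intro i
    exact continuous_const.mul (ℓ i).continuous
  have hDcp : IsCompact D := isCompact_binary_bv T hT n p hp σ hσ D hD1 hD2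
  have hCclosed : IsClosed (convexHull ℝ (Pi0 '' D)) :=
    (isCompact_convexHull_fin (hDcp.image hPicont)).isClosed
  have hconv : Convex ℝ {z | Pi0 z ∈ convexHull ℝ (Pi0 '' D)} := by
    intro z hz w hw s t hs ht hst
    show Pi0 (s • z + t • w) ∈ convexHull ℝ (Pi0 '' D)
    have heq : Pi0 (s • z + t • w) = s • Pi0 z + t • Pi0 w := by
      funext i
      show (b i - a i)⁻¹ * ℓ i (s • z + t • w) = _
      rw [map_add, (ℓ i).map_smul, (ℓ i).map_smul]
      show (b i - a i)⁻¹ * (s * ℓ i z + t * ℓ i w)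
        = s * ((b i - a i)⁻¹ * ℓ i z) + t * ((b i - a i)⁻¹ * ℓ i w)
      ring
    rw [heq]
    exact (convex_convexHull ℝ _) hz hw hs ht hst
  have hDsub : D ⊆ {z | Pi0 z ∈ convexHull ℝ (Pi0 '' D)} := fun z hz =>
    subset_convexHull ℝ _ (mem_image_of_mem _ hz)
  have hclosed : IsClosed {z | Pi0 z ∈ convexHull ℝ (Pi0 '' D)} :=
    hCclosed.preimage hPicont
  intro x hx
  have hmem : Pi0 x ∈ convexHull ℝ (Pi0 '' D) :=
    closure_minimal (convexHull_min hDsub hconv) hclosed hx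
  have himg : Pi0 '' D = (fun u : Lp (Fin n → ℝ) p (volume.restrict (Ioo (0:ℝ) T)) =>
      fun i : Fin M => (b i - a i)⁻¹ *
        ∫ t in Ioo (a i) (b i), (u : ℝ → Fin n → ℝ) t (j i)
          ∂(volume.restrict (Ioo (0:ℝ) T))) '' D :=
    image_congr fun z _ => hPieq z
  rw [hPieq x, himg] at hmem
  exact hmem
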